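/- For σ > 0, lim_{ε→0⁺} (1/(-log ε)) Σ_{n=1}^∞ (1/n)·Φ(-ε√n/σ) = 1, where Φ is the standard normal distribution function. -/

import Mathlib

open Real MeasureTheory Filter
open Set Topology


lemma gauss_integrable : Integrable (fun t : ℝ => Real.exp (-t ^ 2 / 2)) := by
  have h := integrable_exp_neg_mul_sq (by norm_num : (0:ℝ) < 1/2)
  exact h.congr (Eventually.of_forall fun x => by norm_num [neg_div]; ring_nf)

lemma gauss_total : ∫ t : ℝ, Real.exp (-t ^ 2 / 2) = Real.sqrt (2 * Real.pi) := by
  have h := integral_gaussian (1/2)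
  rw [show π / (1/2) = 2 * π by ring] at h
  rw [← h]
  congr 1 with t
  ring_nf

lemma gauss_Iic_zero : ∫ t in Iic (0:ℝ), Real.exp (-t ^ 2 / 2) = Real.sqrt (2 * Real.pi) / 2 := by
  have heven : ∫ t in Iic (0:ℝ), Real.exp (-t ^ 2 / 2) = ∫ t in Ioi (0:ℝ), Real.exp (-t ^ 2 / 2) := by
    have := integral_comp_neg_Iic 0 (fun t => Real.exp (-t ^ 2 / 2))
    simp only [neg_zero] at this
    rw [← this]
    congr 1 with t
    norm_num
  have hsplit : (∫ t in Iic (0:ℝ), Real.exp (-t ^ 2 / 2)) + ∫ t in Ioi (0:ℝ), Real.exp (-t ^ 2 / 2)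
      = ∫ t : ℝ, Real.exp (-t ^ 2 / 2) := by
    rw [← setIntegral_union (by simp [disjoint_left]) measurableSet_Ioi
      gauss_integrable.integrableOn gauss_integrable.integrableOn, Iic_union_Ioi,
      Measure.restrict_univ]
  rw [gauss_total] at hsplit
  linarith [heven ▸ hsplit]

/-- The standard normal distribution function. -/
noncomputable def stdNormalCDF (y : ℝ) : ℝ :=
  (Real.sqrt (2 * Real.pi))⁻¹ * ∫ t in Set.Iic y, Real.exp (-t ^ 2 / 2)

lemma sqrt_two_pi_pos : 0 < Real.sqrt (2 * Real.pi) :=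
  Real.sqrt_pos.2 (by positivity)

lemma stdNormalCDF_nonneg (y : ℝ) : 0 ≤ stdNormalCDF y := by
  apply mul_nonneg (inv_nonneg.2 (Real.sqrt_nonneg _))
  exact setIntegral_nonneg measurableSet_Iic fun t _ => (Real.exp_pos _).le

lemma stdNormalCDF_zero : stdNormalCDF 0 = 1 / 2 := by
  rw [stdNormalCDF, gauss_Iic_zero]
  field_simp

lemma setIntegral_Iic_comp_add (f : ℝ → ℝ) (a c : ℝ) :
    ∫ t in Iic a, f (t + c) = ∫ t in Iic (a + c), f t := by
  have A : MeasurableEmbedding fun x : ℝ => x + c :=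
    (Homeomorph.addRight c).isClosedEmbedding.measurableEmbedding
  have h := A.setIntegral_map (μ := volume) f (Iic (a + c))
  rw [map_add_right_eq_self] at h
  rw [h]
  congr 1
  ext x
  simp

lemma stdNormalCDF_lower {x : ℝ} (hx : 0 ≤ x) :
    1 / 2 - x / Real.sqrt (2 * Real.pi) ≤ stdNormalCDF (-x) := by
  have hint : ∀ s : Set ℝ, IntegrableOn (fun t : ℝ => Real.exp (-t ^ 2 / 2)) s :=
    fun s => gauss_integrable.integrableOn
  have hdiff : (∫ t in Iic (0:ℝ), Real.exp (-t ^ 2 / 2)) - ∫ t in Iic (-x), Real.exp (-t ^ 2 / 2)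
      = ∫ t in (-x)..(0:ℝ), Real.exp (-t ^ 2 / 2) := by
    rw [intervalIntegral.integral_Iic_sub_Iic (hint _) (hint _)]
  have hbound : ∫ t in (-x)..(0:ℝ), Real.exp (-t ^ 2 / 2) ≤ x := by
    have h1 : ∫ t in (-x)..(0:ℝ), Real.exp (-t ^ 2 / 2) ≤ ∫ t in (-x)..(0:ℝ), (1:ℝ) := by
      apply intervalIntegral.integral_mono_on (by linarith) ((hint _).intervalIntegrable ..)
        (intervalIntegrable_const)
      intro t _
      rw [← Real.exp_zero]
      apply Real.exp_le_exp.2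
      nlinarith [sq_nonneg t]
    simpa using h1.trans (by simp)
  have h0 : stdNormalCDF 0 - stdNormalCDF (-x) ≤ x / Real.sqrt (2 * Real.pi) := by
    rw [stdNormalCDF, stdNormalCDF, ← mul_sub, hdiff, div_eq_inv_mul]
    exact mul_le_mul_of_nonneg_left hbound (inv_nonneg.2 (Real.sqrt_nonneg _))
  rw [stdNormalCDF_zero] at h0
  linarith

lemma stdNormalCDF_upper {x : ℝ} (hx : 0 ≤ x) :
    stdNormalCDF (-x) ≤ (1 / 2) * Real.exp (-x ^ 2 / 2) := by
  have hint : ∀ s : Set ℝ, IntegrableOn (fun t : ℝ => Real.exp (-t ^ 2 / 2)) s :=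
    fun s => gauss_integrable.integrableOn
  have key : ∫ t in Iic (-x), Real.exp (-t ^ 2 / 2)
      ≤ Real.exp (-x ^ 2 / 2) * ∫ t in Iic (-x), Real.exp (-(t + x) ^ 2 / 2) := by
    rw [← integral_const_mul]
    apply setIntegral_mono_on (hint _) ?_ measurableSet_Iic
    · intro t ht
      simp only [mem_Iic] at ht
      rw [← Real.exp_add]
      apply Real.exp_le_exp.2
      nlinarith [mul_nonneg hx (neg_nonneg.2 (by linarith : t + x ≤ 0))]
    · have := ((gauss_integrable.comp_add_right x).const_mul (Real.exp (-x ^ 2 / 2))).integrableOn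
        (s := Iic (-x))
      exact this.congr_fun (fun t _ => rfl) measurableSet_Iic
  have htrans : ∫ t in Iic (-x), Real.exp (-(t + x) ^ 2 / 2)
      = ∫ t in Iic (0:ℝ), Real.exp (-t ^ 2 / 2) := by
    rw [setIntegral_Iic_comp_add (fun t => Real.exp (-t ^ 2 / 2)) (-x) x]
    norm_num
  rw [htrans, gauss_Iic_zero] at key
  rw [stdNormalCDF]
  calc (Real.sqrt (2 * Real.pi))⁻¹ * ∫ t in Iic (-x), Real.exp (-t ^ 2 / 2)
      ≤ (Real.sqrt (2 * Real.pi))⁻¹ * (Real.exp (-x ^ 2 / 2) * (Real.sqrt (2 * Real.pi) / 2)) :=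
        mul_le_mul_of_nonneg_left key (inv_nonneg.2 (Real.sqrt_nonneg _))
    _ = (1 / 2) * Real.exp (-x ^ 2 / 2) := by
        field_simp

lemma sum_range_inv_succ (N : ℕ) :
    ∑ n ∈ Finset.range N, (1 / (n + 1 : ℝ)) = (harmonic N : ℝ) := by
  induction N with
  | zero => simp
  | succ k ih =>
      rw [Finset.sum_range_succ, ih, harmonic_succ]
      push_cast
      ring

lemma sum_inv_sqrt (M : ℕ) :
    ∑ n ∈ Finset.range M, 1 / Real.sqrt (n + 1) ≤ 2 * Real.sqrt M := by
  induction M with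
  | zero => simp
  | succ k ih =>
      rw [Finset.sum_range_succ]
      have ha : (0:ℝ) ≤ Real.sqrt k := Real.sqrt_nonneg _
      have hb : (0:ℝ) < Real.sqrt (k + 1) := Real.sqrt_pos.2 (by positivity)
      have ha2 : Real.sqrt k ^ 2 = k := Real.sq_sqrt (by positivity)
      have hb2 : Real.sqrt (k + 1) ^ 2 = (k:ℝ) + 1 := Real.sq_sqrt (by positivity)
      have key : 1 / Real.sqrt (k + 1) ≤ 2 * Real.sqrt (k + 1) - 2 * Real.sqrt k := by
        rw [div_le_iff₀ hb]
        nlinarith [sq_nonneg (Real.sqrt (k+1) - Real.sqrt k)]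
      push_cast
      push_cast at ih
      linarith

lemma summable_term {σ ε : ℝ} (hσ : 0 < σ) (hε : 0 < ε) :
    Summable (fun n : ℕ => (1 / (n + 1 : ℝ)) * stdNormalCDF (-(ε * Real.sqrt (n + 1) / σ))) := by
  set r := Real.exp (-(ε ^ 2 / (2 * σ ^ 2))) with hr
  have hr0 : 0 < r := Real.exp_pos _
  have hr1 : r < 1 := Real.exp_lt_one_iff.2 (by positivity |> neg_neg_iff_pos.2)
  apply Summable.of_nonneg_of_le
    (fun n => mul_nonneg (by positivity) (stdNormalCDF_nonneg _))
    (fun n => ?_) (((summable_geometric_of_lt_one hr0.le hr1).mul_left (1/2)))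
  have hx : (0:ℝ) ≤ ε * Real.sqrt (n + 1) / σ := by positivity
  calc (1 / (n + 1 : ℝ)) * stdNormalCDF (-(ε * Real.sqrt (n + 1) / σ))
      ≤ 1 * ((1/2) * Real.exp (-(ε * Real.sqrt (n + 1) / σ) ^ 2 / 2)) := by
        apply mul_le_mul _ (stdNormalCDF_upper hx) (stdNormalCDF_nonneg _) zero_le_one
        rw [div_le_one (by positivity)]; have := Nat.cast_nonneg (α := ℝ) n; linarith
    _ ≤ (1/2) * r ^ n := by
        rw [one_mul]
        apply mul_le_mul_of_nonneg_left _ (by norm_num)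
        have hsq : (ε * Real.sqrt (n + 1) / σ) ^ 2 = ε ^ 2 * (n + 1) / σ ^ 2 := by
          rw [div_pow, mul_pow, Real.sq_sqrt (by positivity)]
        rw [hsq, hr, ← Real.exp_nat_mul]
        apply Real.exp_le_exp.2
        have hdiff : (n:ℝ) * -(ε ^ 2 / (2 * σ ^ 2)) - (-(ε ^ 2 * ((n:ℝ) + 1) / σ ^ 2) / 2)
            = ε ^ 2 / σ ^ 2 / 2 := by
          field_simp; ring
        have hpos : (0:ℝ) ≤ ε ^ 2 / σ ^ 2 / 2 := by positivity
        linarith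

lemma stdNormalCDF_le_half {x : ℝ} (hx : 0 ≤ x) : stdNormalCDF (-x) ≤ 1 / 2 := by
  have h := stdNormalCDF_upper hx
  have : Real.exp (-x ^ 2 / 2) ≤ 1 := Real.exp_le_one_iff.2 (by nlinarith [sq_nonneg x])
  nlinarith

set_option maxHeartbeats 1000000 in
lemma tsum_upper {σ ε : ℝ} (hσ : 0 < σ) (hε : 0 < ε) (hεσ : ε ≤ σ) :
    ∑' n : ℕ, (1 / (n + 1 : ℝ)) * stdNormalCDF (-(ε * Real.sqrt (n + 1) / σ))
      ≤ -Real.log ε + (3 / 2 + Real.log 2 / 2 + Real.log σ) := by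
  set c := ε ^ 2 / (2 * σ ^ 2) with hc
  have hc0 : 0 < c := by positivity
  set r := Real.exp (-c) with hrdef
  have hr0 : 0 < r := Real.exp_pos _
  have hr1 : r < 1 := Real.exp_lt_one_iff.2 (neg_neg_iff_pos.2 hc0)
  set N := ⌈σ ^ 2 / ε ^ 2⌉₊ with hNdef
  have hx0 : (0:ℝ) < σ ^ 2 / ε ^ 2 := by positivity
  have hN1 : 1 ≤ N := Nat.one_le_ceil_iff.2 hx0
  have hNge : σ ^ 2 / ε ^ 2 ≤ (N : ℝ) := Nat.le_ceil _
  have hsum := summable_term hσ hε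
  rw [← Summable.sum_add_tsum_nat_add N hsum]
  -- head bound
  have hhead : ∑ n ∈ Finset.range N, (1 / (n + 1 : ℝ)) * stdNormalCDF (-(ε * Real.sqrt (n + 1) / σ))
      ≤ (1 / 2) * (harmonic N : ℝ) := by
    rw [← sum_range_inv_succ, Finset.mul_sum]
    apply Finset.sum_le_sum
    intro n _
    rw [mul_comm (1/2 : ℝ)]
    exact mul_le_mul_of_nonneg_left (stdNormalCDF_le_half (by positivity)) (by positivity)
  -- tail bound
  set K : ℝ := 1 / ((N:ℝ) + 1) * (1 / 2) with hKdef
  have hNinv : (1 : ℝ) / ((N : ℝ) + 1) ≤ 2 * c := by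
    rw [div_le_iff₀ (by positivity)]
    have heq : 1 / (2 * c) = σ ^ 2 / ε ^ 2 := by rw [hc]; field_simp
    have h1 : 1 / (2 * c) ≤ (N : ℝ) + 1 := by rw [heq]; linarith
    calc (1:ℝ) = (2 * c) * (1 / (2 * c)) := by field_simp
      _ ≤ (2 * c) * ((N:ℝ) + 1) := mul_le_mul_of_nonneg_left h1 (by positivity)
      _ = 2 * c * ((N:ℝ) + 1) := rfl
  have hK : K ≤ c := by rw [hKdef]; nlinarith
  have hbound : ∀ n : ℕ, (1 / ((n + N : ℕ) + 1 : ℝ)) * stdNormalCDF (-(ε * Real.sqrt ((n + N : ℕ) + 1) / σ))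
      ≤ K * r ^ (n + 1) := by
    intro n
    push_cast
    have hxnn : (0:ℝ) ≤ ε * Real.sqrt ((n:ℝ) + N + 1) / σ := by positivity
    have h1 : (1 : ℝ) / ((n:ℝ) + N + 1) ≤ 1 / ((N:ℝ) + 1) := by
      apply div_le_div_of_nonneg_left one_pos.le (by positivity)
      simp [Nat.cast_nonneg]
    have h2 : stdNormalCDF (-(ε * Real.sqrt ((n:ℝ) + N + 1) / σ)) ≤ (1/2) * r ^ (n + 1) := by
      calc stdNormalCDF (-(ε * Real.sqrt ((n:ℝ) + N + 1) / σ))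
          ≤ (1/2) * Real.exp (-(ε * Real.sqrt ((n:ℝ) + N + 1) / σ) ^ 2 / 2) :=
            stdNormalCDF_upper hxnn
        _ = (1/2) * r ^ (n + N + 1) := by
            congr 1
            have hsq : (ε * Real.sqrt ((n:ℝ) + N + 1) / σ) ^ 2 = ε ^ 2 * ((n:ℝ) + N + 1) / σ ^ 2 := by
              rw [div_pow, mul_pow, Real.sq_sqrt (by positivity)]
            rw [hsq, hrdef, ← Real.exp_nat_mul]
            congr 1
            push_cast
            rw [hc]
            field_simp
        _ ≤ (1/2) * r ^ (n + 1) := by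
            apply mul_le_mul_of_nonneg_left _ (by norm_num)
            exact pow_le_pow_of_le_one hr0.le hr1.le (by omega)
    calc (1 / ((n:ℝ) + N + 1)) * stdNormalCDF (-(ε * Real.sqrt ((n:ℝ) + N + 1) / σ))
        ≤ (1 / ((N:ℝ) + 1)) * ((1/2) * r ^ (n + 1)) :=
          mul_le_mul h1 h2 (stdNormalCDF_nonneg _) (by positivity)
      _ = K * r ^ (n + 1) := by rw [hKdef]; ring
  have hgeo : Summable (fun n : ℕ => K * r ^ (n + 1)) := by
    simp_rw [pow_succ]
    exact (((summable_geometric_of_lt_one hr0.le hr1).mul_right r).mul_left K)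
  have htail : ∑' n : ℕ, (1 / ((n + N : ℕ) + 1 : ℝ)) * stdNormalCDF (-(ε * Real.sqrt ((n + N : ℕ) + 1) / σ)) ≤ 1 := by
    have h1 : ∑' n : ℕ, (1 / ((n + N : ℕ) + 1 : ℝ)) * stdNormalCDF (-(ε * Real.sqrt ((n + N : ℕ) + 1) / σ))
        ≤ ∑' n : ℕ, K * r ^ (n + 1) := by
      apply Summable.tsum_le_tsum hbound ((summable_nat_add_iff N).2 hsum) hgeo
    have h2 : ∑' n : ℕ, K * r ^ (n + 1) = K * ((1 - r)⁻¹ * r) := by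
      simp_rw [pow_succ]
      rw [tsum_mul_left, tsum_mul_right, tsum_geometric_of_lt_one hr0.le hr1]
    have hratio : (1 - r)⁻¹ * r ≤ 1 / c := by
      have h1r : 0 < 1 - r := by linarith
      rw [mul_comm, ← div_eq_mul_inv, div_le_div_iff₀ h1r hc0]
      have hre : r * Real.exp c = 1 := by rw [hrdef, ← Real.exp_add]; simp
      have h4 : r * (c + 1) ≤ 1 := by
        calc r * (c + 1) ≤ r * Real.exp c :=
              mul_le_mul_of_nonneg_left (Real.add_one_le_exp c) hr0.le
          _ = 1 := hre
      nlinarith [h4]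
    have h3 : K * ((1 - r)⁻¹ * r) ≤ 1 := by
      calc K * ((1 - r)⁻¹ * r) ≤ c * (1 / c) := by
            have h1r : (0:ℝ) < 1 - r := by linarith
            exact mul_le_mul hK hratio (mul_nonneg (inv_nonneg.2 h1r.le) hr0.le) hc0.le
        _ = 1 := by field_simp
    linarith [h2 ▸ h1]
  -- log bound for N
  have hN0 : (0:ℝ) < (N:ℝ) := by exact_mod_cast hN1
  have hge1 : (1:ℝ) ≤ σ ^ 2 / ε ^ 2 := by
    rw [le_div_iff₀ (by positivity)]
    nlinarith
  have hNle : (N:ℝ) ≤ 2 * (σ ^ 2 / ε ^ 2) := by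
    have hceil := Nat.ceil_lt_add_one hx0.le
    rw [← hNdef] at hceil
    linarith
  have hlogN : Real.log N ≤ Real.log 2 + 2 * Real.log σ - 2 * Real.log ε := by
    calc Real.log N ≤ Real.log (2 * (σ ^ 2 / ε ^ 2)) := Real.log_le_log hN0 hNle
      _ = Real.log 2 + 2 * Real.log σ - 2 * Real.log ε := by
          rw [Real.log_mul (by norm_num) (by positivity), Real.log_div (by positivity) (by positivity),
            Real.log_pow, Real.log_pow]
          push_cast
          ring
  have hharm := harmonic_le_one_add_log N
  linarith

set_option maxHeartbeats 1000000 in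
lemma tsum_lower {σ ε : ℝ} (hσ : 0 < σ) (hε : 0 < ε) :
    -Real.log ε + (Real.log σ - 1)
      ≤ ∑' n : ℕ, (1 / (n + 1 : ℝ)) * stdNormalCDF (-(ε * Real.sqrt (n + 1) / σ)) := by
  have hsum := summable_term hσ hε
  set M := ⌊σ ^ 2 / ε ^ 2⌋₊ with hMdef
  have hx0 : (0:ℝ) < σ ^ 2 / ε ^ 2 := by positivity
  have hMle : (M:ℝ) ≤ σ ^ 2 / ε ^ 2 := Nat.floor_le hx0.le
  have hMge : σ ^ 2 / ε ^ 2 < (M:ℝ) + 1 := Nat.lt_floor_add_one _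
  have hsqrtM : Real.sqrt M ≤ σ / ε := by
    have h := Real.sqrt_le_sqrt hMle
    rwa [show σ ^ 2 / ε ^ 2 = (σ / ε) ^ 2 by ring, Real.sqrt_sq (by positivity)] at h
  have hstep : ∀ n : ℕ, (1/2) * (1 / ((n:ℝ) + 1)) - (ε / (σ * Real.sqrt (2 * π))) * (1 / Real.sqrt ((n:ℝ) + 1))
      ≤ (1 / ((n:ℝ) + 1)) * stdNormalCDF (-(ε * Real.sqrt ((n:ℝ) + 1) / σ)) := by
    intro n
    have hxnn : (0:ℝ) ≤ ε * Real.sqrt ((n:ℝ) + 1) / σ := by positivity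
    have hlow := stdNormalCDF_lower hxnn
    have ha : (0:ℝ) < 1 / ((n:ℝ) + 1) := by positivity
    have h1 := mul_le_mul_of_nonneg_left hlow ha.le
    have hs : Real.sqrt ((n:ℝ) + 1) * Real.sqrt ((n:ℝ) + 1) = (n:ℝ) + 1 :=
      Real.mul_self_sqrt (by positivity)
    have hsp : (0:ℝ) < Real.sqrt ((n:ℝ) + 1) := Real.sqrt_pos.2 (by positivity)
    have heq : (1 / ((n:ℝ) + 1)) * (1 / 2 - (ε * Real.sqrt ((n:ℝ) + 1) / σ) / Real.sqrt (2 * π))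
        = (1/2) * (1 / ((n:ℝ) + 1)) - (ε / (σ * Real.sqrt (2 * π))) * (1 / Real.sqrt ((n:ℝ) + 1)) := by
      rw [← hs]
      have h2pi := sqrt_two_pi_pos
      field_simp
      linear_combination (-(2*ε*(Real.sqrt (Real.sqrt ((n:ℝ) + 1) ^ 2) + Real.sqrt ((n:ℝ) + 1)))) * Real.sqrt_sq hsp.le
    linarith [heq ▸ h1]
  have hmain : ∑ n ∈ Finset.range M, ((1/2) * (1 / ((n:ℝ) + 1)) - (ε / (σ * Real.sqrt (2 * π))) * (1 / Real.sqrt ((n:ℝ) + 1)))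
      ≤ ∑' n : ℕ, (1 / (n + 1 : ℝ)) * stdNormalCDF (-(ε * Real.sqrt (n + 1) / σ)) := by
    calc _ ≤ ∑ n ∈ Finset.range M, (1 / ((n:ℝ) + 1)) * stdNormalCDF (-(ε * Real.sqrt ((n:ℝ) + 1) / σ)) :=
          Finset.sum_le_sum fun n _ => hstep n
      _ ≤ _ := Summable.sum_le_tsum _ (fun n _ => mul_nonneg (by positivity) (stdNormalCDF_nonneg _)) hsum
  rw [Finset.sum_sub_distrib, ← Finset.mul_sum, ← Finset.mul_sum, sum_range_inv_succ] at hmain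
  have hsub : (ε / (σ * Real.sqrt (2 * π))) * (∑ n ∈ Finset.range M, 1 / Real.sqrt ((n:ℝ) + 1)) ≤ 1 := by
    have hcoef : (0:ℝ) ≤ ε / (σ * Real.sqrt (2 * π)) := by positivity
    calc (ε / (σ * Real.sqrt (2 * π))) * (∑ n ∈ Finset.range M, 1 / Real.sqrt ((n:ℝ) + 1))
        ≤ (ε / (σ * Real.sqrt (2 * π))) * (2 * Real.sqrt M) := by
          apply mul_le_mul_of_nonneg_left _ hcoef
          exact_mod_cast sum_inv_sqrt M
      _ ≤ (ε / (σ * Real.sqrt (2 * π))) * (2 * (σ / ε)) := by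
          apply mul_le_mul_of_nonneg_left _ hcoef
          linarith
      _ = 2 / Real.sqrt (2 * π) := by field_simp
      _ ≤ 1 := by
          rw [div_le_one sqrt_two_pi_pos]
          exact (Real.le_sqrt' (by norm_num)).2 (by nlinarith [Real.pi_gt_three])
  have hharm : Real.log ((M:ℝ) + 1) ≤ (harmonic M : ℝ) := by
    have := log_add_one_le_harmonic M
    push_cast at this ⊢
    linarith
  have hlog : 2 * (Real.log σ - Real.log ε) ≤ Real.log ((M:ℝ) + 1) := by
    have h1 : Real.log (σ ^ 2 / ε ^ 2) ≤ Real.log ((M:ℝ) + 1) :=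
      Real.log_le_log hx0 hMge.le
    rw [Real.log_div (by positivity) (by positivity), Real.log_pow, Real.log_pow] at h1
    push_cast at h1
    linarith
  linarith


theorem spataru_log_asymptotics (σ : ℝ) (hσ : 0 < σ) :
    Tendsto (fun ε : ℝ =>
        (1 / (-Real.log ε)) * ∑' n : ℕ,
          (1 / (n + 1 : ℝ)) * stdNormalCDF (-(ε * Real.sqrt (n + 1) / σ)))
      (nhdsWithin 0 (Set.Ioi 0)) (nhds 1) := by
  set S : ℝ → ℝ := fun ε => ∑' n : ℕ,
      (1 / (n + 1 : ℝ)) * stdNormalCDF (-(ε * Real.sqrt (n + 1) / σ)) with hS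
  have hL : Tendsto (fun ε : ℝ => -Real.log ε) (𝓝[>] 0) atTop :=
    tendsto_neg_atBot_atTop.comp Real.tendsto_log_nhdsGT_zero
  have hinv : Tendsto (fun ε : ℝ => (-Real.log ε)⁻¹) (𝓝[>] 0) (𝓝 0) :=
    hL.inv_tendsto_atTop
  set Cu : ℝ := 3 / 2 + Real.log 2 / 2 + Real.log σ with hCu
  set Cl : ℝ := Real.log σ - 1 with hCl
  have hg : Tendsto (fun ε : ℝ => 1 + Cl * (-Real.log ε)⁻¹) (𝓝[>] 0) (𝓝 1) := by
    have := tendsto_const_nhds (x := (1:ℝ)) (f := 𝓝[>] (0:ℝ)) |>.add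
      ((tendsto_const_nhds (x := Cl)).mul hinv)
    simpa using this
  have hh : Tendsto (fun ε : ℝ => 1 + Cu * (-Real.log ε)⁻¹) (𝓝[>] 0) (𝓝 1) := by
    have := tendsto_const_nhds (x := (1:ℝ)) (f := 𝓝[>] (0:ℝ)) |>.add
      ((tendsto_const_nhds (x := Cu)).mul hinv)
    simpa using this
  have hmem : Set.Ioo (0:ℝ) (min σ 1) ∈ 𝓝[>] (0:ℝ) :=
    Ioo_mem_nhdsGT_of_mem ⟨le_refl _, lt_min hσ one_pos⟩
  apply tendsto_of_tendsto_of_tendsto_of_le_of_le' hg hh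
  · -- lower eventual bound
    filter_upwards [hmem] with ε hε
    obtain ⟨hε0, hεlt⟩ := hε
    have hε1 : ε < 1 := hεlt.trans_le (min_le_right _ _)
    have hLpos : 0 < -Real.log ε := by
      have := Real.log_neg hε0 hε1
      linarith
    have hlow := tsum_lower hσ hε0 (σ := σ)
    have heq : (1 / (-Real.log ε)) * (-Real.log ε + Cl) = 1 + Cl * (-Real.log ε)⁻¹ := by
      rw [mul_add, one_div, inv_mul_cancel₀ (ne_of_gt hLpos), mul_comm]
    rw [← heq]
    exact mul_le_mul_of_nonneg_left hlow (by positivity)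
  · -- upper eventual bound
    filter_upwards [hmem] with ε hε
    obtain ⟨hε0, hεlt⟩ := hε
    have hε1 : ε < 1 := hεlt.trans_le (min_le_right _ _)
    have hεσ : ε ≤ σ := (hεlt.trans_le (min_le_left _ _)).le
    have hLpos : 0 < -Real.log ε := by
      have := Real.log_neg hε0 hε1
      linarith
    have hup := tsum_upper hσ hε0 hεσ
    have heq : (1 / (-Real.log ε)) * (-Real.log ε + Cu) = 1 + Cu * (-Real.log ε)⁻¹ := by
      rw [mul_add, one_div, inv_mul_cancel₀ (ne_of_gt hLpos), mul_comm]
    rw [← heq]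
    exact mul_le_mul_of_nonneg_left hup (by positivity)
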